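/- Let g : ℝ^d → [0,∞) be an integrable function, A₁, A₂ positive definite d×d matrices, α₁, α₂ > 0, a₁, a₂ ∈ ℝ^d, and β₁, β₂ > 0 with β₁+β₂=1. Set α = α₁^{β₁}α₂^{β₂}, A = β₁A₁+β₂A₂, a = β₁a₁+β₂a₂. Then ∫ α·g(A⁻¹(x−a)) dx ≥ (∫ α₁·g(A₁⁻¹(x−a₁)) dx)^{β₁} · (∫ α₂·g(A₂⁻¹(x−a₂)) dx)^{β₂}. -/

import Mathlib

open MeasureTheory
noncomputable section

lemma posDef_smul' {d : ℕ} {A : Matrix (Fin d) (Fin d) ℝ} (hA : A.PosDef)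
    {c : ℝ} (hc : 0 < c) : (c • A).PosDef := by
  refine Matrix.PosDef.of_dotProduct_mulVec_pos ?_ (fun x hx => ?_)
  · unfold Matrix.IsHermitian
    rw [Matrix.conjTranspose_smul, hA.1.eq]
    simp
  · rw [Matrix.smul_mulVec, dotProduct_smul]
    exact mul_pos hc (hA.dotProduct_mulVec_pos hx)

/-- Minkowski-type determinant inequality for `β₁ • 1 + β₂ • B`, `B` posdef. -/
lemma det_convex_one_aux {d : ℕ} {B : Matrix (Fin d) (Fin d) ℝ} (hB : B.PosDef)
    {β₁ β₂ : ℝ} (hβ₁ : 0 < β₁) (hβ₂ : 0 < β₂) (hβ : β₁ + β₂ = 1) :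
    B.det ^ β₂ ≤ ((β₁ • (1 : Matrix (Fin d) (Fin d) ℝ)) + β₂ • B).det := by
  have hH := hB.isHermitian
  set U : Matrix (Fin d) (Fin d) ℝ := (hH.eigenvectorUnitary : Matrix (Fin d) (Fin d) ℝ) with hU
  have hUU : U * star U = 1 := Matrix.mem_unitaryGroup_iff.mp hH.eigenvectorUnitary.2
  have hdetU : U.det * (star U).det = 1 := by
    rw [← Matrix.det_mul, hUU, Matrix.det_one]
  set lam := hH.eigenvalues with hlam
  have hspec : B = U * Matrix.diagonal (RCLike.ofReal ∘ lam) * star U := hH.spectral_theorem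
  have hdiag : (RCLike.ofReal ∘ lam : Fin d → ℝ) = lam := by
    funext i; simp [RCLike.ofReal]
  rw [hdiag] at hspec
  have hkey : (β₁ • (1 : Matrix (Fin d) (Fin d) ℝ)) + β₂ • B
      = U * Matrix.diagonal (fun i => β₁ + β₂ * lam i) * star U := by
    have h1 : (1 : Matrix (Fin d) (Fin d) ℝ) = U * 1 * star U := by
      rw [Matrix.mul_one, hUU]
    calc (β₁ • (1 : Matrix (Fin d) (Fin d) ℝ)) + β₂ • B
        = β₁ • (U * 1 * star U) + β₂ • (U * Matrix.diagonal lam * star U) := by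
          rw [← h1, ← hspec]
      _ = U * (β₁ • (1:Matrix (Fin d) (Fin d) ℝ) + β₂ • Matrix.diagonal lam) * star U := by
          rw [Matrix.mul_add, Matrix.add_mul]
          simp [Matrix.mul_smul, Matrix.smul_mul]
      _ = U * Matrix.diagonal (fun i => β₁ + β₂ * lam i) * star U := by
          congr 1
          congr 1
          ext i j
          by_cases h : i = j <;>
            simp [h, Matrix.diagonal_apply, Matrix.one_apply, mul_comm]
  have hdet : ((β₁ • (1 : Matrix (Fin d) (Fin d) ℝ)) + β₂ • B).det
      = ∏ i, (β₁ + β₂ * lam i) := by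
    rw [hkey, Matrix.det_mul, Matrix.det_mul, Matrix.det_diagonal]
    linear_combination (∏ i, (β₁ + β₂ * lam i)) * hdetU
  have hlampos : ∀ i, 0 < lam i := hB.eigenvalues_pos
  have hdetB : B.det = ∏ i, lam i := by
    rw [hH.det_eq_prod_eigenvalues]; norm_num; rfl
  rw [hdet, hdetB]
  rw [← Real.finset_prod_rpow _ _ (fun i _ => (hlampos i).le)]
  apply Finset.prod_le_prod
  · intro i _
    exact Real.rpow_nonneg (hlampos i).le _
  · intro i _
    calc (lam i) ^ β₂ = 1 ^ β₁ * (lam i) ^ β₂ := by rw [Real.one_rpow, one_mul]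
      _ ≤ β₁ * 1 + β₂ * lam i := Real.geom_mean_le_arith_mean2_weighted hβ₁.le hβ₂.le
          zero_le_one (hlampos i).le hβ
      _ = β₁ + β₂ * lam i := by ring

set_option maxHeartbeats 1000000 in
lemma posDef_conj' {d : ℕ} {A M : Matrix (Fin d) (Fin d) ℝ} (hA : A.PosDef)
    (hM : M.det ≠ 0) : (M.conjTranspose * A * M).PosDef := by
  refine Matrix.PosDef.of_dotProduct_mulVec_pos (Matrix.isHermitian_conjTranspose_mul_mul M hA.1) (fun x hx => ?_)
  have hMu : IsUnit M := (Matrix.isUnit_iff_isUnit_det M).mpr hM.isUnit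
  have hinj : Function.Injective M.mulVec := Matrix.mulVec_injective_iff_isUnit.mpr hMu
  have hx' : M.mulVec x ≠ 0 := fun h => hx (hinj (by simpa using h))
  have h := hA.dotProduct_mulVec_pos hx'
  rw [Matrix.star_mulVec, Matrix.dotProduct_mulVec, Matrix.vecMul_vecMul,
    ← Matrix.dotProduct_mulVec] at h
  rw [Matrix.mulVec_mulVec] at h
  exact h

open scoped MatrixOrder in
/-- Minkowski determinant inequality (multiplicative form). -/
lemma det_convex_comb {d : ℕ} {A₁ A₂ : Matrix (Fin d) (Fin d) ℝ}
    (hA₁ : A₁.PosDef) (hA₂ : A₂.PosDef)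
    {β₁ β₂ : ℝ} (hβ₁ : 0 < β₁) (hβ₂ : 0 < β₂) (hβ : β₁ + β₂ = 1) :
    A₁.det ^ β₁ * A₂.det ^ β₂ ≤ (β₁ • A₁ + β₂ • A₂).det := by
  -- S = sqrt of A₁
  set S := CFC.sqrt A₁ with hSdef
  have hSS : S * S = A₁ := CFC.sqrt_mul_sqrt_self A₁ hA₁.posSemidef.nonneg
  have hd1 : 0 < A₁.det := hA₁.det_pos
  have hd2 : 0 < A₂.det := hA₂.det_pos
  have hdetS2 : S.det * S.det = A₁.det := by rw [← Matrix.det_mul, hSS]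
  have hdetS : S.det ≠ 0 := by
    intro h; rw [h, mul_zero] at hdetS2; exact hd1.ne hdetS2
  have hSH : S.IsHermitian := (Matrix.nonneg_iff_posSemidef.mp (CFC.sqrt_nonneg A₁)).1
  have hSinvH : (S⁻¹).IsHermitian := hSH.inv
  have hdetSinv : (S⁻¹).det ≠ 0 := by
    rw [Matrix.det_nonsing_inv, Ring.inverse_eq_inv]
    exact inv_ne_zero hdetS
  have hSu : IsUnit S := (Matrix.isUnit_iff_isUnit_det S).mpr hdetS.isUnit
  set B := S⁻¹ * A₂ * S⁻¹ with hBdef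
  have hB : B.PosDef := by
    have := posDef_conj' hA₂ hdetSinv
    rwa [hSinvH.eq] at this
  have hSmul : S * S⁻¹ = 1 := Matrix.mul_nonsing_inv S hdetS.isUnit
  have hSmul' : S⁻¹ * S = 1 := Matrix.nonsing_inv_mul S hdetS.isUnit
  have hconj : β₁ • A₁ + β₂ • A₂ = S * (β₁ • (1 : Matrix (Fin d) (Fin d) ℝ) + β₂ • B) * S := by
    rw [Matrix.mul_add, Matrix.add_mul]
    congr 1
    · rw [Matrix.mul_smul, Matrix.smul_mul, Matrix.mul_one, hSS]
    · rw [Matrix.mul_smul, Matrix.smul_mul]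
      congr 1
      symm
      calc S * B * S = S * (S⁻¹ * A₂ * S⁻¹) * S := rfl
        _ = (S * S⁻¹) * A₂ * (S⁻¹ * S) := by noncomm_ring
        _ = A₂ := by rw [hSmul, hSmul', Matrix.one_mul, Matrix.mul_one]
  have hdetB : B.det = A₂.det / A₁.det := by
    rw [hBdef, Matrix.det_mul, Matrix.det_mul, Matrix.det_nonsing_inv, Ring.inverse_eq_inv,
      ← hdetS2]
    field_simp
  have hkey := det_convex_one_aux hB hβ₁ hβ₂ hβ
  have hdetconj : (β₁ • A₁ + β₂ • A₂).det
      = A₁.det * ((β₁ • (1 : Matrix (Fin d) (Fin d) ℝ)) + β₂ • B).det := by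
    rw [hconj, Matrix.det_mul, Matrix.det_mul, ← hdetS2]
    ring
  rw [hdetconj]
  calc A₁.det ^ β₁ * A₂.det ^ β₂
      = A₁.det ^ β₁ * (A₁.det ^ β₂ * (A₂.det / A₁.det) ^ β₂) := by
        rw [← Real.mul_rpow hd1.le (by positivity), mul_div_cancel₀ _ hd1.ne']
    _ = A₁.det * (A₂.det / A₁.det) ^ β₂ := by
        rw [← mul_assoc, ← Real.rpow_add hd1, hβ, Real.rpow_one]
    _ ≤ A₁.det * ((β₁ • (1 : Matrix (Fin d) (Fin d) ℝ)) + β₂ • B).det := by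
        apply mul_le_mul_of_nonneg_left _ hd1.le
        rw [← hdetB]; exact hkey

/-- Change of variables for an affine substitution. -/
lemma integral_affine {d : ℕ} (g : (Fin d → ℝ) → ℝ) (hgint : Integrable g)
    {M : Matrix (Fin d) (Fin d) ℝ} (hM : M.PosDef) (a : Fin d → ℝ) :
    ∫ x, g (M⁻¹.mulVec (x - a)) = M.det * ∫ x, g x := by
  have hdet : 0 < M.det := hM.det_pos
  have hinvdet : (M⁻¹).det ≠ 0 := by
    rw [Matrix.det_nonsing_inv, Ring.inverse_eq_inv]
    exact inv_ne_zero hdet.ne'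
  have hmap : Measure.map (Matrix.toLin' M⁻¹) volume
      = ENNReal.ofReal M.det • (volume : Measure (Fin d → ℝ)) := by
    rw [Real.map_matrix_volume_pi_eq_smul_volume_pi hinvdet]
    congr 1
    rw [Matrix.det_nonsing_inv, Ring.inverse_eq_inv, inv_inv, abs_of_pos hdet]
  have hmeas : Measurable (Matrix.toLin' (M⁻¹ : Matrix (Fin d) (Fin d) ℝ)) :=
    (LinearMap.continuous_on_pi _).measurable
  calc ∫ x, g (M⁻¹.mulVec (x - a))
      = ∫ x, g (M⁻¹.mulVec x) := by
        exact integral_sub_right_eq_self (fun x => g (M⁻¹.mulVec x)) a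
    _ = ∫ y, g y ∂(Measure.map (Matrix.toLin' M⁻¹) volume) := by
        rw [integral_map hmeas.aemeasurable]
        · simp_rw [Matrix.toLin'_apply]
        · rw [hmap]
          exact hgint.aestronglyMeasurable.smul_measure _
    _ = (ENNReal.ofReal M.det).toReal • ∫ y, g y := by
        rw [hmap, integral_smul_measure]
    _ = M.det * ∫ x, g x := by
        rw [ENNReal.toReal_ofReal hdet.le, smul_eq_mul]

/-- **Integral of the interpolated position** dominates the geometric mean of the integrals. -/
theorem interpolation_integral {d : ℕ} (g : (Fin d → ℝ) → ℝ)
    (hg0 : ∀ x, 0 ≤ g x) (hgint : Integrable g)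
    (A₁ A₂ : Matrix (Fin d) (Fin d) ℝ) (hA₁ : A₁.PosDef) (hA₂ : A₂.PosDef)
    (α₁ α₂ : ℝ) (hα₁ : 0 < α₁) (hα₂ : 0 < α₂)
    (a₁ a₂ : Fin d → ℝ)
    (β₁ β₂ : ℝ) (hβ₁ : 0 < β₁) (hβ₂ : 0 < β₂) (hβ : β₁ + β₂ = 1) :
    (∫ x, α₁ * g (A₁⁻¹.mulVec (x - a₁))) ^ β₁ *
      (∫ x, α₂ * g (A₂⁻¹.mulVec (x - a₂))) ^ β₂ ≤
    ∫ x, (α₁ ^ β₁ * α₂ ^ β₂) *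
        g ((β₁ • A₁ + β₂ • A₂)⁻¹.mulVec (x - (β₁ • a₁ + β₂ • a₂))) := by
  have hA : (β₁ • A₁ + β₂ • A₂).PosDef :=
    (posDef_smul' hA₁ hβ₁).add (posDef_smul' hA₂ hβ₂)
  have hI : 0 ≤ ∫ x, g x := integral_nonneg hg0
  have h1 : (∫ x, α₁ * g (A₁⁻¹.mulVec (x - a₁))) = α₁ * (A₁.det * ∫ x, g x) := by
    rw [integral_const_mul, integral_affine g hgint hA₁]
  have h2 : (∫ x, α₂ * g (A₂⁻¹.mulVec (x - a₂))) = α₂ * (A₂.det * ∫ x, g x) := by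
    rw [integral_const_mul, integral_affine g hgint hA₂]
  have h3 : (∫ x, (α₁ ^ β₁ * α₂ ^ β₂) *
        g ((β₁ • A₁ + β₂ • A₂)⁻¹.mulVec (x - (β₁ • a₁ + β₂ • a₂))))
      = (α₁ ^ β₁ * α₂ ^ β₂) * ((β₁ • A₁ + β₂ • A₂).det * ∫ x, g x) := by
    rw [integral_const_mul, integral_affine g hgint hA]
  rw [h1, h2, h3]
  have hd1 : 0 < A₁.det := hA₁.det_pos
  have hd2 : 0 < A₂.det := hA₂.det_pos
  calc (α₁ * (A₁.det * ∫ x, g x)) ^ β₁ * (α₂ * (A₂.det * ∫ x, g x)) ^ β₂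
      = (α₁ ^ β₁ * α₂ ^ β₂) * ((A₁.det ^ β₁ * A₂.det ^ β₂) * ((∫ x, g x) ^ β₁ * (∫ x, g x) ^ β₂)) := by
        rw [Real.mul_rpow hα₁.le (by positivity), Real.mul_rpow hα₂.le (by positivity),
          Real.mul_rpow hd1.le hI, Real.mul_rpow hd2.le hI]
        ring
    _ = (α₁ ^ β₁ * α₂ ^ β₂) * ((A₁.det ^ β₁ * A₂.det ^ β₂) * ∫ x, g x) := by
        rw [← Real.rpow_add' hI (by rw [hβ]; norm_num), hβ, Real.rpow_one]
    _ ≤ (α₁ ^ β₁ * α₂ ^ β₂) * ((β₁ • A₁ + β₂ • A₂).det * ∫ x, g x) := by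
        apply mul_le_mul_of_nonneg_left _ (by positivity)
        apply mul_le_mul_of_nonneg_right _ hI
        exact det_convex_comb hA₁ hA₂ hβ₁ hβ₂ hβ
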